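/- Let μ, ν ∈ Par_n and p ∈ Z_{≥0} with |μ| + |ν| + p even, and suppose (μ, ν, (1^p)) satisfies every extended Horn inequality (with ambient set [N], N large enough). Set k = (|μ| + |ν| − p)/2. Then μ/(μ∧ν) and ν/(μ∧ν) are vertical strips, and there exist at least |μ∧ν| − k rows i such that μ_i = ν_i > 0. -/

import Mathlib

/-- `μ` is a partition with at most `n` parts: a weakly decreasing sequence
`μ 0 ≥ μ 1 ≥ ⋯` of naturals (the paper's part `μ_{i+1}` is `μ i`, i.e. we use
0-indexing) vanishing from index `n` on. -/
def IsPartitionN (n : ℕ) (μ : ℕ → ℕ) : Prop :=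
  Antitone μ ∧ ∀ i, n ≤ i → μ i = 0

/-- The cells `(row, column)` (both 0-indexed) of the skew shape `lam/mu`. -/
def skewCells (lam mu : ℕ → ℕ) : Set (ℕ × ℕ) :=
  {p | mu p.1 ≤ p.2 ∧ p.2 < lam p.1}

/-- `T` is a Littlewood–Richardson skew tableau of shape `lam/mu` and content
`nu`: the shape `mu` is contained in `lam`, rows weakly increase, columns
strictly increase, the (0-indexed) letter `t` occurs `nu t` times, and every
prefix of the reverse reading word (rows read right-to-left, top-to-bottom)
contains at least as many letters `t` as letters `t+1`. -/
def IsLRTableau (lam mu nu : ℕ → ℕ) (T : ℕ × ℕ → ℕ) : Prop :=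
  (∀ i, mu i ≤ lam i) ∧
  (∀ i j j', mu i ≤ j → j ≤ j' → j' < lam i → T (i, j) ≤ T (i, j')) ∧
  (∀ i j, (i, j) ∈ skewCells lam mu → (i + 1, j) ∈ skewCells lam mu →
    T (i, j) < T (i + 1, j)) ∧
  (∀ t, Set.ncard {p ∈ skewCells lam mu | T p = t} = nu t) ∧
  (∀ i j t,
    Set.ncard {p ∈ skewCells lam mu |
        T p = t + 1 ∧ (p.1 < i ∨ (p.1 = i ∧ j ≤ p.2))} ≤
      Set.ncard {p ∈ skewCells lam mu |
        T p = t ∧ (p.1 < i ∨ (p.1 = i ∧ j ≤ p.2))})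

/-- The Littlewood–Richardson coefficient `c^{lam}_{mu,nu}`: the number of
Littlewood–Richardson skew tableaux of shape `lam/mu` and content `nu`
(tableaux are normalized to vanish off the shape). -/
noncomputable def lrCoeff (lam mu nu : ℕ → ℕ) : ℕ :=
  Set.ncard {T : ℕ × ℕ → ℕ | IsLRTableau lam mu nu T ∧
    ∀ p ∉ skewCells lam mu, T p = 0}

/-- The Newell–Littlewood number
`N_{μ,ν,λ} = ∑_{α,β,γ} c^μ_{α,β} c^ν_{α,γ} c^λ_{β,γ}`, realized as the number
of tuples `((α, β, γ), (T₁, T₂, T₃))` where `α, β, γ` are partitions and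
`T₁, T₂, T₃` are Littlewood–Richardson tableaux witnessing the coefficients
`c^μ_{α,β}`, `c^ν_{α,γ}` and `c^λ_{β,γ}` respectively. -/
noncomputable def nlNumber (mu nu lam : ℕ → ℕ) : ℕ :=
  Set.ncard {x : ((ℕ → ℕ) × (ℕ → ℕ) × (ℕ → ℕ)) ×
      ((ℕ × ℕ → ℕ) × (ℕ × ℕ → ℕ) × (ℕ × ℕ → ℕ)) |
    Antitone x.1.1 ∧ Antitone x.1.2.1 ∧ Antitone x.1.2.2 ∧
    (IsLRTableau mu x.1.1 x.1.2.1 x.2.1 ∧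
      ∀ p ∉ skewCells mu x.1.1, x.2.1 p = 0) ∧
    (IsLRTableau nu x.1.1 x.1.2.2 x.2.2.1 ∧
      ∀ p ∉ skewCells nu x.1.1, x.2.2.1 p = 0) ∧
    (IsLRTableau lam x.1.2.1 x.1.2.2 x.2.2.2 ∧
      ∀ p ∉ skewCells lam x.1.2.1, x.2.2.2 p = 0)}

/-- For `I = {i₁ < ⋯ < i_d} ⊆ {0, 1, 2, …}` (the 0-indexed version of the
paper's subsets of positive integers), `tauPartition I` is `τ(I)`, i.e. the
partition whose (0-indexed) part `t` is `i_{d-t} − (d−t−1) - 1`; for the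
paper's 1-indexed sets this is `τ(I) = (i_d − d ≥ ⋯ ≥ i₂ − 2 ≥ i₁ − 1)`. -/
def tauPartition (I : Finset ℕ) : ℕ → ℕ := fun t =>
  if t < I.card then
    (I.sort (· ≤ ·)).getD (I.card - 1 - t) 0 - (I.card - 1 - t)
  else 0

/-- Conditions (I)–(III) defining the set `𝒢_n` of data for the extended Horn
inequalities: all six sets are subsets of `{0, …, n−1}` (the 0-indexed version
of `[n] = {1, …, n}`), `A ∩ A' = B ∩ B' = C ∩ C' = ∅`,
`|A| = |B'| + |C'|`, `|B| = |A'| + |C'|`, `|C| = |A'| + |B'|`, and there exist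
`A₁, A₂, B₁, B₂, C₁, C₂ ⊆ {0, …, n−1}` with `|A₁| = |A₂| = |A'|`,
`|B₁| = |B₂| = |B'|`, `|C₁| = |C₂| = |C'|` such that
`c^{τ(A')}_{τ(A₁),τ(A₂)}, c^{τ(B')}_{τ(B₁),τ(B₂)}, c^{τ(C')}_{τ(C₁),τ(C₂)} > 0`
and `c^{τ(A)}_{τ(B₁),τ(C₂)}, c^{τ(B)}_{τ(C₁),τ(A₂)}, c^{τ(C)}_{τ(A₁),τ(B₂)} > 0`. -/
def IsExtHornTuple (n : ℕ) (A A' B B' C C' : Finset ℕ) : Prop :=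
  A ⊆ Finset.range n ∧ A' ⊆ Finset.range n ∧ B ⊆ Finset.range n ∧
    B' ⊆ Finset.range n ∧ C ⊆ Finset.range n ∧ C' ⊆ Finset.range n ∧
  Disjoint A A' ∧ Disjoint B B' ∧ Disjoint C C' ∧
  A.card = B'.card + C'.card ∧ B.card = A'.card + C'.card ∧
    C.card = A'.card + B'.card ∧
  ∃ A₁ A₂ B₁ B₂ C₁ C₂ : Finset ℕ,
    A₁ ⊆ Finset.range n ∧ A₂ ⊆ Finset.range n ∧ B₁ ⊆ Finset.range n ∧
      B₂ ⊆ Finset.range n ∧ C₁ ⊆ Finset.range n ∧ C₂ ⊆ Finset.range n ∧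
    A₁.card = A'.card ∧ A₂.card = A'.card ∧ B₁.card = B'.card ∧
      B₂.card = B'.card ∧ C₁.card = C'.card ∧ C₂.card = C'.card ∧
    0 < lrCoeff (tauPartition A') (tauPartition A₁) (tauPartition A₂) ∧
    0 < lrCoeff (tauPartition B') (tauPartition B₁) (tauPartition B₂) ∧
    0 < lrCoeff (tauPartition C') (tauPartition C₁) (tauPartition C₂) ∧
    0 < lrCoeff (tauPartition A) (tauPartition B₁) (tauPartition C₂) ∧
    0 < lrCoeff (tauPartition B) (tauPartition C₁) (tauPartition A₂) ∧
    0 < lrCoeff (tauPartition C) (tauPartition A₁) (tauPartition B₂)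

/-- `(μ, ν, lam)` satisfies every extended Horn inequality (with ambient set
`{0, …, n−1}`). -/
def SatisfiesExtHorn (n : ℕ) (μ ν lam : ℕ → ℕ) : Prop :=
  ∀ A A' B B' C C' : Finset ℕ, IsExtHornTuple n A A' B B' C C' →
    (0 : ℤ) ≤ (∑ i ∈ A, (μ i : ℤ)) - (∑ i ∈ A', (μ i : ℤ)) +
      (∑ j ∈ B, (ν j : ℤ)) - (∑ j ∈ B', (ν j : ℤ)) +
      (∑ k ∈ C, (lam k : ℤ)) - (∑ k ∈ C', (lam k : ℤ))

/-- The single-column partition `(1^p)`. -/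
def columnPartition (p : ℕ) : ℕ → ℕ := fun i => if i < p then 1 else 0

namespace ColumnCaseAux

/-- the zero partition -/
def zfn : ℕ → ℕ := fun _ => 0

/-- single-row partition -/
def sgl (a : ℕ) : ℕ → ℕ := fun t => if t = 0 then a else 0

/-- prepend a part on top -/
def prep (a : ℕ) (f : ℕ → ℕ) : ℕ → ℕ := fun t => if t = 0 then a else f (t - 1)

lemma skewCells_finite {lam mu : ℕ → ℕ} (L M : ℕ) (hL : ∀ i, L ≤ i → lam i = 0)
    (hM : ∀ i, lam i ≤ M) : (skewCells lam mu).Finite := by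
  apply Set.Finite.subset ((Set.finite_Iio L).prod (Set.finite_Iio M))
  rintro ⟨i, j⟩ hmem
  obtain ⟨h1, h2⟩ : mu i ≤ j ∧ j < lam i := hmem
  refine ⟨?_, lt_of_lt_of_le h2 (hM i)⟩
  simp only [Set.mem_Iio]
  by_contra h
  have := hL i (by omega)
  omega

lemma tableau_val_lt {lam mu nu : ℕ → ℕ} {T : ℕ × ℕ → ℕ} {K : ℕ}
    (hfin : (skewCells lam mu).Finite) (hK : ∀ t, K ≤ t → nu t = 0)
    (hT : IsLRTableau lam mu nu T) {q : ℕ × ℕ} (hq : q ∈ skewCells lam mu) :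
    T q < K := by
  by_contra h
  push_neg at h
  have hcont := hT.2.2.2.1 (T q)
  have hsub : {p ∈ skewCells lam mu | T p = T q} ⊆ skewCells lam mu :=
    fun p hp => hp.1
  have hfin2 : {p ∈ skewCells lam mu | T p = T q}.Finite := hfin.subset hsub
  have : {p ∈ skewCells lam mu | T p = T q} = ∅ := by
    rw [← Set.ncard_eq_zero hfin2]
    rw [hcont]
    exact hK _ h
  have hmem : q ∈ {p ∈ skewCells lam mu | T p = T q} := ⟨hq, rfl⟩
  rw [this] at hmem
  exact Set.notMem_empty q hmem

lemma lrSet_finite {lam mu nu : ℕ → ℕ} (K : ℕ)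
    (hfin : (skewCells lam mu).Finite) (hK : ∀ t, K ≤ t → nu t = 0) :
    {T : ℕ × ℕ → ℕ | IsLRTableau lam mu nu T ∧
      ∀ p ∉ skewCells lam mu, T p = 0}.Finite := by
  classical
  set C := hfin.toFinset with hC
  set F : (ℕ × ℕ → ℕ) → (C → Fin (K + 1)) :=
    fun T c => ⟨min (T c.1) K, by omega⟩ with hF
  apply Set.Finite.of_finite_image (f := F)
  · exact Set.Finite.subset (Set.finite_univ) (Set.subset_univ _)
  · intro T hT T' hT' hEq
    funext p
    by_cases hp : p ∈ skewCells lam mu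
    · have h1 : T p < K := tableau_val_lt hfin hK hT.1 hp
      have h2 : T' p < K := tableau_val_lt hfin hK hT'.1 hp
      have := congrFun hEq ⟨p, by simp [hC, hp]⟩
      simp only [hF, Fin.mk.injEq] at this
      omega
    · rw [hT.2 p hp, hT'.2 p hp]

lemma ncard_row (lam mu : ℕ → ℕ) (t : ℕ) :
    {p ∈ skewCells lam mu | p.1 = t}.ncard = lam t - mu t := by
  have h : {p ∈ skewCells lam mu | p.1 = t} =
      (fun c => (t, c)) '' (Set.Ico (mu t) (lam t)) := by
    ext ⟨i, j⟩
    constructor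
    · rintro ⟨⟨h1, h2⟩, h3⟩
      simp only at h3
      subst h3
      exact ⟨j, ⟨h1, h2⟩, rfl⟩
    · rintro ⟨c, ⟨h1, h2⟩, h3⟩
      cases h3
      exact ⟨⟨h1, h2⟩, rfl⟩
  rw [h, Set.ncard_image_of_injOn (fun x _ y _ h => by simpa using h),
    ← Finset.coe_Ico, Set.ncard_coe_finset, Nat.card_Ico]

end ColumnCaseAux

namespace ColumnCaseAux

lemma skewCells_self (π : ℕ → ℕ) : skewCells π π = ∅ := by
  ext ⟨i, j⟩
  simp only [skewCells, Set.mem_setOf_eq, Set.mem_empty_iff_false, iff_false]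
  omega

lemma lr_pos_empty (π : ℕ → ℕ) : 0 < lrCoeff π π zfn := by
  rw [lrCoeff]
  have hcells := skewCells_self π
  have hsep : ∀ Q : ℕ × ℕ → Prop, {p ∈ skewCells π π | Q p} = ∅ := by
    intro Q; rw [hcells]; ext p; simp
  have hfin : {T : ℕ × ℕ → ℕ | IsLRTableau π π zfn T ∧
      ∀ p ∉ skewCells π π, T p = 0}.Finite :=
    lrSet_finite 0 (by rw [hcells]; exact Set.finite_empty) (fun t _ => rfl)
  rw [Set.ncard_pos hfin]
  refine ⟨fun _ => 0, ⟨fun i => le_rfl, fun _ _ _ _ _ _ => le_rfl, ?_, ?_, ?_⟩,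
    fun _ _ => rfl⟩
  · intro i j h1 _
    rw [hcells] at h1; exact absurd h1 (Set.notMem_empty _)
  · intro t
    rw [hsep]
    simp [zfn]
  · intro i j t
    rw [hsep, hsep]

lemma lr_pos_row (i j : ℕ) : 0 < lrCoeff (sgl (i + j)) (sgl j) (sgl i) := by
  rw [lrCoeff]
  have hrow : ∀ p : ℕ × ℕ, p ∈ skewCells (sgl (i + j)) (sgl j) → p.1 = 0 := by
    rintro ⟨x, c⟩ ⟨h1, h2⟩
    by_contra h
    simp only [sgl, if_neg h] at h2
    omega
  have hcellfin : (skewCells (sgl (i + j)) (sgl j)).Finite := by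
    refine skewCells_finite 1 (i + j) (fun x hx => ?_) (fun x => ?_)
    · simp only [sgl]; rw [if_neg (by omega)]
    · simp only [sgl]; split <;> omega
  have hfin := lrSet_finite 1 hcellfin
    (nu := sgl i) (fun t ht => by simp only [sgl]; rw [if_neg (by omega)])
  rw [Set.ncard_pos hfin]
  refine ⟨fun _ => 0, ⟨?_, fun _ _ _ _ _ _ => le_rfl, ?_, ?_, ?_⟩, fun _ _ => rfl⟩
  · intro x
    simp only [sgl]; split <;> omega
  · intro x c h1 h2
    have := hrow _ h2
    simp at this
  · intro t
    match t with
    | 0 =>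
      have hset : {p ∈ skewCells (sgl (i + j)) (sgl j) | (fun _ => 0) p = 0} =
          {p ∈ skewCells (sgl (i + j)) (sgl j) | p.1 = 0} := by
        ext p
        exact ⟨fun ⟨hp, _⟩ => ⟨hp, hrow p hp⟩, fun ⟨hp, _⟩ => ⟨hp, rfl⟩⟩
      rw [hset, ncard_row]
      simp [sgl]
    | (t + 1) =>
      have hset : {p ∈ skewCells (sgl (i + j)) (sgl j) | (fun _ => 0) p = t + 1} =
          ∅ := by
        ext p; simp
      rw [hset]
      simp only [Set.ncard_empty, sgl]
      rw [if_neg (by omega)]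
  · intro i0 j0 t
    have hset : {p ∈ skewCells (sgl (i + j)) (sgl j) |
        (fun _ => 0) p = t + 1 ∧ (p.1 < i0 ∨ (p.1 = i0 ∧ j0 ≤ p.2))} = ∅ := by
      ext p; simp
    rw [hset]
    simp

lemma lr_pos_superstd (π : ℕ → ℕ) (hπ : Antitone π) (m : ℕ)
    (hm : ∀ t, m ≤ t → π t = 0) : 0 < lrCoeff π zfn π := by
  classical
  rw [lrCoeff]
  set T : ℕ × ℕ → ℕ := fun p => if p.2 < π p.1 then p.1 else 0 with hT
  have hmem : ∀ p : ℕ × ℕ, p ∈ skewCells π zfn ↔ p.2 < π p.1 := by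
    intro p
    constructor
    · rintro ⟨_, h2⟩; exact h2
    · intro h; exact ⟨Nat.zero_le _, h⟩
  have hTval : ∀ p : ℕ × ℕ, p ∈ skewCells π zfn → T p = p.1 := by
    intro p hp
    rw [hT]
    simp only
    rw [if_pos ((hmem p).1 hp)]
  have hcellfin : (skewCells π zfn).Finite :=
    skewCells_finite m (π 0) (fun x hx => hm x hx) (fun x => hπ (Nat.zero_le x))
  have hfin := lrSet_finite m hcellfin (nu := π) hm
  rw [Set.ncard_pos hfin]
  refine ⟨T, ⟨fun x => Nat.zero_le _, ?_, ?_, ?_, ?_⟩, ?_⟩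
  · -- rows weakly increasing
    intro x c c' h1 h2 h3
    have e1 : T (x, c) = x := hTval (x, c) ((hmem _).2 (by simpa using lt_of_le_of_lt h2 h3))
    have e2 : T (x, c') = x := hTval (x, c') ((hmem _).2 (by simpa using h3))
    omega
  · -- columns strictly increasing
    intro x c hc hc'
    rw [hTval _ hc, hTval _ hc']
    omega
  · -- content
    intro t
    have hset : {p ∈ skewCells π zfn | T p = t} = {p ∈ skewCells π zfn | p.1 = t} := by
      ext p
      exact ⟨fun ⟨hp, h⟩ => ⟨hp, by rw [← hTval p hp]; exact h⟩,
        fun ⟨hp, h⟩ => ⟨hp, by rw [hTval p hp]; exact h⟩⟩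
    rw [hset, ncard_row]
    simp [zfn]
  · -- ballot
    intro i0 j0 t
    set Lset := {p ∈ skewCells π zfn | T p = t + 1 ∧ (p.1 < i0 ∨ (p.1 = i0 ∧ j0 ≤ p.2))}
    set Rset := {p ∈ skewCells π zfn | T p = t ∧ (p.1 < i0 ∨ (p.1 = i0 ∧ j0 ≤ p.2))}
    have hR : Rset.Finite := hcellfin.subset (fun p hp => hp.1)
    refine Set.ncard_le_ncard_of_injOn (fun p => (p.1 - 1, p.2)) ?_ ?_ hR
    · rintro ⟨x, c⟩ ⟨hp, hv, hpos⟩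
      have hx : x = t + 1 := by rw [hTval _ hp] at hv; exact hv
      subst hx
      have hc : c < π (t + 1) := (hmem _).1 hp
      have hcell : ((t + 1 : ℕ) - 1, c) ∈ skewCells π zfn := by
        refine (hmem _).2 ?_
        simp only
        calc c < π (t + 1) := hc
        _ ≤ π ((t+1) - 1) := hπ (by omega)
      refine ⟨hcell, ?_, ?_⟩
      · rw [hTval _ hcell]; simp
      · left
        rcases hpos with h | ⟨h, _⟩ <;> simp <;> omega
    · rintro ⟨x, c⟩ ⟨hp, hv, _⟩ ⟨y, d⟩ ⟨hq, hw, _⟩ heq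
      have hx : x = t + 1 := by rw [hTval _ hp] at hv; exact hv
      have hy : y = t + 1 := by rw [hTval _ hq] at hw; exact hw
      simp only [Prod.mk.injEq] at heq
      simp [hx, hy, heq.2]
  · -- vanishing
    intro p hp
    rw [hT]
    simp only
    rw [if_neg (fun h => hp ((hmem p).2 h))]

end ColumnCaseAux

namespace ColumnCaseAux

lemma lr_pos_strip (π : ℕ → ℕ) (hπ : Antitone π) (m : ℕ)
    (hm : ∀ t, m ≤ t → π t = 0) (a : ℕ) (ha : π 0 ≤ a) :
    0 < lrCoeff (prep a π) π (sgl a) := by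
  classical
  rw [lrCoeff]
  have hlam_le : ∀ l, prep a π l ≤ a := by
    intro l
    simp only [prep]
    split
    · exact le_rfl
    · exact le_trans (hπ (Nat.zero_le _)) ha
  have hlam_succ : ∀ l, prep a π (l + 1) = π l := by
    intro l; simp [prep]
  have hcellfin : (skewCells (prep a π) π).Finite := by
    refine skewCells_finite (m + 1) a (fun x hx => ?_) hlam_le
    have : x - 1 ≥ m := by omega
    simp only [prep]
    rw [if_neg (by omega)]
    exact hm _ this
  have hfin := lrSet_finite 1 hcellfin (nu := sgl a)
    (fun t ht => by simp only [sgl]; rw [if_neg (by omega)])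
  rw [Set.ncard_pos hfin]
  refine ⟨fun _ => 0, ⟨?_, fun _ _ _ _ _ _ => le_rfl, ?_, ?_, ?_⟩, fun _ _ => rfl⟩
  · -- mu ≤ lam
    intro x
    match x with
    | 0 => simpa [prep] using ha
    | (x + 1) => rw [hlam_succ]; exact hπ (by omega)
  · -- columns: no two cells in same column
    rintro x c ⟨h1, _⟩ ⟨_, h4⟩
    rw [hlam_succ] at h4
    simp only at h1 h4
    omega
  · -- content
    intro t
    match t with
    | 0 =>
      have hset : {p ∈ skewCells (prep a π) π | (fun _ => 0) p = 0} =
          skewCells (prep a π) π := by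
        ext p; exact ⟨fun ⟨hp, _⟩ => hp, fun hp => ⟨hp, rfl⟩⟩
      rw [hset]
      -- ncard of the horizontal strip is a
      have himg : (fun p : ℕ × ℕ => p.2) '' (skewCells (prep a π) π) = Set.Iio a := by
        ext c
        constructor
        · rintro ⟨⟨x, c'⟩, ⟨h1, h2⟩, rfl⟩
          exact lt_of_lt_of_le h2 (hlam_le x)
        · intro hc
          simp only [Set.mem_Iio] at hc
          by_cases h0 : π 0 ≤ c
          · exact ⟨(0, c), ⟨h0, by simpa [prep] using hc⟩, rfl⟩
          · have hex : ∃ l, π l ≤ c := ⟨m, by rw [hm m le_rfl]; omega⟩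
            set l := Nat.find hex with hl
            have hspec : π l ≤ c := Nat.find_spec hex
            have hlne : l ≠ 0 := by
              intro h; rw [h] at hspec; omega
            have hmin : ¬ π (l - 1) ≤ c := Nat.find_min hex (by omega)
            refine ⟨(l, c), ⟨hspec, ?_⟩, rfl⟩
            simp only [prep]
            rw [if_neg hlne]
            omega
      have hinj : Set.InjOn (fun p : ℕ × ℕ => p.2) (skewCells (prep a π) π) := by
        rintro ⟨x, c⟩ ⟨h1, h2⟩ ⟨y, d⟩ ⟨h3, h4⟩ heq
        simp only at heq h1 h2 h3 h4
        subst heq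
        rcases lt_trichotomy x y with h | h | h
        · exfalso
          have : y - 1 ≥ x := by omega
          have hy : prep a π y = π (y - 1) := by
            simp only [prep]; rw [if_neg (by omega)]
          rw [hy] at h4
          have := hπ this
          omega
        · rw [h]
        · exfalso
          have : x - 1 ≥ y := by omega
          have hx : prep a π x = π (x - 1) := by
            simp only [prep]; rw [if_neg (by omega)]
          rw [hx] at h2
          have := hπ this
          omega
      have := Set.ncard_image_of_injOn hinj
      rw [himg] at this
      rw [← this, ← Finset.coe_range, Set.ncard_coe_finset, Finset.card_range]
      simp [sgl]
    | (t + 1) =>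
      have hset : {p ∈ skewCells (prep a π) π | (fun _ => 0) p = t + 1} = ∅ := by
        ext p; simp
      rw [hset]
      simp only [Set.ncard_empty, sgl]
      rw [if_neg (by omega)]
  · -- ballot
    intro i0 j0 t
    have hset : {p ∈ skewCells (prep a π) π |
        (fun _ => 0) p = t + 1 ∧ (p.1 < i0 ∨ (p.1 = i0 ∧ j0 ≤ p.2))} = ∅ := by
      ext p; simp
    rw [hset]
    simp

lemma lr_pos_shifted (π : ℕ → ℕ) (hπ : Antitone π) (m : ℕ)
    (hm : ∀ t, m ≤ t → π t = 0) (j : ℕ) :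
    0 < lrCoeff (prep j π) (sgl j) π := by
  classical
  rw [lrCoeff]
  set T : ℕ × ℕ → ℕ :=
    fun p => if (sgl j p.1 ≤ p.2 ∧ p.2 < prep j π p.1) then p.1 - 1 else 0 with hT
  have hmem : ∀ p : ℕ × ℕ, p ∈ skewCells (prep j π) (sgl j) ↔
      (sgl j p.1 ≤ p.2 ∧ p.2 < prep j π p.1) := by
    intro p; exact ⟨fun h => h, fun h => h⟩
  have hrow0 : ∀ c, ((0 : ℕ), c) ∉ skewCells (prep j π) (sgl j) := by
    rintro c ⟨h1, h2⟩
    simp [sgl, prep] at h1 h2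
    omega
  have hfst : ∀ p : ℕ × ℕ, p ∈ skewCells (prep j π) (sgl j) → p.1 ≠ 0 := by
    rintro ⟨x, c⟩ hp h
    subst h
    exact hrow0 c hp
  have hTval : ∀ p : ℕ × ℕ, p ∈ skewCells (prep j π) (sgl j) → T p = p.1 - 1 := by
    intro p hp
    rw [hT]
    simp only
    rw [if_pos ((hmem p).1 hp)]
  have hlam_succ : ∀ l, prep j π (l + 1) = π l := by intro l; simp [prep]
  have hcellfin : (skewCells (prep j π) (sgl j)).Finite := by
    refine skewCells_finite (m + 1) (j + π 0) (fun x hx => ?_) (fun x => ?_)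
    · simp only [prep]
      rw [if_neg (by omega)]
      exact hm _ (by omega)
    · simp only [prep]
      split
      · omega
      · have := hπ (Nat.zero_le (x - 1)); omega
  have hfin := lrSet_finite m hcellfin (nu := π) hm
  rw [Set.ncard_pos hfin]
  refine ⟨T, ⟨?_, ?_, ?_, ?_, ?_⟩, ?_⟩
  · -- mu ≤ lam
    intro x
    match x with
    | 0 => simp [sgl, prep]
    | (x + 1) => simp [sgl, prep]
  · -- rows constant
    intro x c c' h1 h2 h3
    have m1 : (x, c) ∈ skewCells (prep j π) (sgl j) := ⟨h1, lt_of_le_of_lt h2 h3⟩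
    have m2 : (x, c') ∈ skewCells (prep j π) (sgl j) := ⟨le_trans h1 h2, h3⟩
    rw [hTval _ m1, hTval _ m2]
  · -- columns strict
    intro x c hc hc'
    have hx : x ≠ 0 := hfst _ hc
    rw [hTval _ hc, hTval _ hc']
    simp only
    omega
  · -- content
    intro t
    have hset : {p ∈ skewCells (prep j π) (sgl j) | T p = t} =
        {p ∈ skewCells (prep j π) (sgl j) | p.1 = t + 1} := by
      ext p
      constructor
      · rintro ⟨hp, hv⟩
        have := hTval p hp
        have := hfst p hp
        exact ⟨hp, by omega⟩
      · rintro ⟨hp, hv⟩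
        refine ⟨hp, ?_⟩
        rw [hTval p hp]
        omega
    rw [hset, ncard_row]
    rw [hlam_succ]
    simp [sgl]
  · -- ballot
    intro i0 j0 t
    have hR : {p ∈ skewCells (prep j π) (sgl j) |
        T p = t ∧ (p.1 < i0 ∨ (p.1 = i0 ∧ j0 ≤ p.2))}.Finite :=
      hcellfin.subset (fun p hp => hp.1)
    refine Set.ncard_le_ncard_of_injOn (fun p => (p.1 - 1, p.2)) ?_ ?_ hR
    · rintro ⟨x, c⟩ ⟨hp, hv, hpos⟩
      have hx : x = t + 2 := by
        have h1 := hTval _ hp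
        have h2 := hfst _ hp
        simp only at h1 h2
        omega
      subst hx
      have hc : c < π (t + 1) := by
        have h2 := ((hmem _).1 hp).2
        rwa [hlam_succ] at h2
      have hcell : ((t + 2 : ℕ) - 1, c) ∈ skewCells (prep j π) (sgl j) := by
        refine (hmem _).2 ⟨?_, ?_⟩
        · simp only [sgl]
          rw [if_neg (by omega)]
          omega
        · show c < prep j π (t + 2 - 1)
          have : prep j π (t + 2 - 1) = π t := by
            simp only [prep]
            rw [if_neg (by omega)]
            congr 1
          rw [this]
          exact lt_of_lt_of_le hc (hπ (by omega))
      refine ⟨hcell, ?_, ?_⟩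
      · rw [hTval _ hcell]; simp
      · left
        rcases hpos with h | ⟨h, _⟩ <;> simp only at h ⊢ <;> omega
    · rintro ⟨x, c⟩ ⟨hp, hv, _⟩ ⟨y, d⟩ ⟨hq, hw, _⟩ heq
      have hx : x = t + 2 := by
        have h1 := hTval _ hp
        have h2 := hfst _ hp
        simp only at h1 h2
        omega
      have hy : y = t + 2 := by
        have h1 := hTval _ hq
        have h2 := hfst _ hq
        simp only at h1 h2
        omega
      simp only [Prod.mk.injEq] at heq
      simp [hx, hy, heq.2]
  · -- vanishing
    intro p hp
    rw [hT]
    simp only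
    rw [if_neg (fun h => hp ((hmem p).2 h))]

end ColumnCaseAux

namespace ColumnCaseAux

lemma tau_apply (S : Finset ℕ) (t : ℕ) : tauPartition S t =
    if t < S.card then (S.sort (· ≤ ·)).getD (S.card - 1 - t) 0 - (S.card - 1 - t)
    else 0 := rfl

lemma tau_eventually_zero (S : Finset ℕ) (t : ℕ) (h : S.card ≤ t) :
    tauPartition S t = 0 := by
  rw [tau_apply, if_neg (by omega)]

lemma sort_getD_add (S : Finset ℕ) : ∀ (d q : ℕ), q + d < S.card →
    (S.sort (· ≤ ·)).getD q 0 + d ≤ (S.sort (· ≤ ·)).getD (q + d) 0 := by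
  intro d
  induction d with
  | zero => intro q h; simp
  | succ d ih =>
    intro q h
    have h1 := ih q (by omega)
    have hlen : (S.sort (· ≤ ·)).length = S.card := Finset.length_sort _
    have hq1 : q + d < (S.sort (· ≤ ·)).length := by omega
    have hq2 : q + d + 1 < (S.sort (· ≤ ·)).length := by omega
    have e1 := List.getD_eq_getElem (S.sort (· ≤ ·)) 0 hq1
    have e2 := List.getD_eq_getElem (S.sort (· ≤ ·)) 0 hq2
    have hlt : (S.sort (· ≤ ·)).getD (q + d) 0 < (S.sort (· ≤ ·)).getD (q + d + 1) 0 := by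
      rw [e1, e2]
      exact (List.pairwise_iff_getElem.1 (((Finset.pairwise_sort S (· ≤ ·)).and (Finset.sort_nodup S (· ≤ ·))).imp (fun h => lt_of_le_of_ne h.1 h.2))) (q + d) (q + d + 1)
        hq1 hq2 (by omega)
    have heq : q + (d + 1) = q + d + 1 := by omega
    rw [heq]
    omega

lemma tau_le (S : Finset ℕ) (h : ℕ) (hb : ∀ x ∈ S, x < h) (t : ℕ) :
    tauPartition S t ≤ h - S.card := by
  rw [tau_apply]
  split
  · rename_i ht
    have hlen : (S.sort (· ≤ ·)).length = S.card := Finset.length_sort _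
    have hgrow := sort_getD_add S t (S.card - 1 - t) (by omega)
    have heq : S.card - 1 - t + t = S.card - 1 := by omega
    rw [heq] at hgrow
    have hmem : (S.sort (· ≤ ·)).getD (S.card - 1) 0 ∈ S := by
      rw [List.getD_eq_getElem _ _ (by omega)]
      exact (Finset.mem_sort (· ≤ ·)).1 (List.getElem_mem _)
    have hlt := hb _ hmem
    omega
  · exact Nat.zero_le _

lemma tau_zero_of_bounded (S : Finset ℕ) (hb : ∀ x ∈ S, x < S.card) :
    tauPartition S = zfn := by
  funext t
  have h := tau_le S S.card hb t
  simp only [Nat.sub_self, Nat.le_zero] at h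
  rw [h]; rfl

lemma tau_range (r : ℕ) : tauPartition (Finset.range r) = zfn :=
  tau_zero_of_bounded _ (by
    intro x hx
    rw [Finset.card_range]
    exact Finset.mem_range.1 hx)

lemma tau_empty : tauPartition (∅ : Finset ℕ) = zfn := by
  have := tau_range 0
  simpa using this

lemma tau_singleton (k : ℕ) : tauPartition {k} = sgl k := by
  funext t
  rw [tau_apply]
  simp only [Finset.card_singleton, Finset.sort_singleton, sgl]
  rcases t with _ | t
  · simp
  · rw [if_neg (by omega), if_neg (by omega)]

lemma tau_antitone (S : Finset ℕ) : Antitone (tauPartition S) := by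
  intro t t' htt'
  rcases le_or_gt S.card t' with h | h
  · rw [tau_eventually_zero S t' h]
    exact Nat.zero_le _
  · have hgrow := sort_getD_add S (t' - t) (S.card - 1 - t') (by omega)
    have heq : S.card - 1 - t' + (t' - t) = S.card - 1 - t := by omega
    rw [heq] at hgrow
    rw [tau_apply, tau_apply, if_pos h, if_pos (by omega : t < S.card)]
    omega

lemma sort_insert_top (S : Finset ℕ) (h : ℕ) (hb : ∀ x ∈ S, x < h) :
    (insert h S).sort (· ≤ ·) = S.sort (· ≤ ·) ++ [h] := by
  have hns : h ∉ S := fun hmem => lt_irrefl h (hb h hmem)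
  have hperm : ((insert h S).sort (· ≤ ·)).Perm (S.sort (· ≤ ·) ++ [h]) := by
    refine List.Perm.trans (Finset.sort_perm_toList _ _) ?_
    refine List.Perm.trans (Finset.toList_insert hns) ?_
    refine List.Perm.trans (List.Perm.cons h (Finset.sort_perm_toList (α := ℕ) S (· ≤ ·)).symm) ?_
    exact (List.perm_append_singleton _ _).symm
  have hs2 : List.Pairwise (· ≤ ·) (S.sort (· ≤ ·) ++ [h]) := by
    rw [List.pairwise_append]
    refine ⟨Finset.pairwise_sort _ _, List.pairwise_singleton _ _, ?_⟩
    intro x hx y hy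
    rw [List.mem_singleton] at hy
    subst hy
    exact le_of_lt (hb x ((Finset.mem_sort (α := ℕ) (· ≤ ·)).1 hx))
  exact List.Perm.eq_of_pairwise' (Finset.pairwise_sort _ _) hs2 hperm

lemma tau_insert_top (S : Finset ℕ) (h : ℕ) (hb : ∀ x ∈ S, x < h) :
    tauPartition (insert h S) = prep (h - S.card) (tauPartition S) := by
  have hns : h ∉ S := fun hmem => lt_irrefl h (hb h hmem)
  have hcard : (insert h S).card = S.card + 1 := Finset.card_insert_of_notMem hns
  have hsort := sort_insert_top S h hb
  have hlen : (S.sort (· ≤ ·)).length = S.card := Finset.length_sort _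
  funext t
  rw [tau_apply, hcard, hsort]
  rcases t with _ | t
  · rw [if_pos (by omega)]
    simp only [prep, if_pos rfl, Nat.sub_zero, Nat.add_sub_cancel]
    rw [List.getD_append_right _ _ _ _ (by omega)]
    rw [hlen]
    simp
  · have hprep : prep (h - S.card) (tauPartition S) (t + 1) = tauPartition S t := by
      simp [prep]
    rw [hprep]
    rcases lt_or_ge (t + 1) (S.card + 1) with hlt | hge
    · rw [if_pos hlt]
      have hidx : S.card + 1 - 1 - (t + 1) = S.card - 1 - t := by omega
      rw [hidx]
      rw [List.getD_append _ _ _ _ (by omega)]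
      rw [tau_apply, if_pos (by omega)]
    · rw [if_neg (by omega), tau_eventually_zero S t (by omega)]

end ColumnCaseAux

namespace ColumnCaseAux

lemma M_tuple (N : ℕ) (S T : Finset ℕ) (hA hB : ℕ)
    (hST : Disjoint S T)
    (hTA : ∀ x ∈ T, x < hA) (hSB : ∀ x ∈ S, x < hB)
    (hAS : hA ∉ S) (hBT : hB ∉ T)
    (hk : S.card + T.card ≤ (hA - T.card) + (hB - S.card))
    (hNA : hA < N) (hNB : hB < N)
    (hNk : (hA - T.card) + (hB - S.card) < N)
    (hSN : ∀ x ∈ S, x < N) (hTN : ∀ x ∈ T, x < N) :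
    IsExtHornTuple N (insert hA T) S (insert hB S) T
      (Finset.range (S.card + T.card)) {(hA - T.card) + (hB - S.card)} := by
  have hAT : hA ∉ T := fun hmem => lt_irrefl hA (hTA hA hmem)
  have hBS : hB ∉ S := fun hmem => lt_irrefl hB (hSB hB hmem)
  have hrt : S.card + T.card < N := by omega
  refine ⟨?_, ?_, ?_, ?_, ?_, ?_, ?_, ?_, ?_, ?_, ?_, ?_, ?_⟩
  · -- A ⊆ range N
    intro x hx
    rcases Finset.mem_insert.1 hx with h | h
    · subst h; exact Finset.mem_range.2 hNA
    · exact Finset.mem_range.2 (hTN x h)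
  · exact fun x hx => Finset.mem_range.2 (hSN x hx)
  · intro x hx
    rcases Finset.mem_insert.1 hx with h | h
    · subst h; exact Finset.mem_range.2 hNB
    · exact Finset.mem_range.2 (hSN x h)
  · exact fun x hx => Finset.mem_range.2 (hTN x hx)
  · intro x hx
    exact Finset.mem_range.2 (lt_of_lt_of_le (Finset.mem_range.1 hx) (by omega))
  · intro x hx
    rw [Finset.mem_singleton] at hx
    subst hx
    exact Finset.mem_range.2 hNk
  · -- Disjoint A A'
    rw [Finset.disjoint_left]
    intro x hx hx'
    rcases Finset.mem_insert.1 hx with h | h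
    · subst h; exact hAS hx'
    · exact (Finset.disjoint_right.1 hST h) hx'
  · rw [Finset.disjoint_left]
    intro x hx hx'
    rcases Finset.mem_insert.1 hx with h | h
    · subst h; exact hBT hx'
    · exact (Finset.disjoint_left.1 hST h) hx'
  · rw [Finset.disjoint_singleton_right]
    intro hmem
    exact absurd (Finset.mem_range.1 hmem) (by omega)
  · rw [Finset.card_insert_of_notMem hAT, Finset.card_singleton]
  · rw [Finset.card_insert_of_notMem hBS, Finset.card_singleton]
  · rw [Finset.card_range]
  · refine ⟨Finset.range S.card, S, T, Finset.range T.card,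
      {hB - S.card}, {hA - T.card}, ?_, ?_, ?_, ?_, ?_, ?_,
      ?_, ?_, ?_, ?_, ?_, ?_, ?_, ?_, ?_, ?_, ?_, ?_⟩
    · intro x hx
      exact Finset.mem_range.2 (lt_of_lt_of_le (Finset.mem_range.1 hx) (by omega))
    · exact fun x hx => Finset.mem_range.2 (hSN x hx)
    · exact fun x hx => Finset.mem_range.2 (hTN x hx)
    · intro x hx
      exact Finset.mem_range.2 (lt_of_lt_of_le (Finset.mem_range.1 hx) (by omega))
    · intro x hx
      rw [Finset.mem_singleton] at hx
      subst hx
      exact Finset.mem_range.2 (by omega)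
    · intro x hx
      rw [Finset.mem_singleton] at hx
      subst hx
      exact Finset.mem_range.2 (by omega)
    · exact Finset.card_range _
    · rfl
    · rfl
    · exact Finset.card_range _
    · rw [Finset.card_singleton, Finset.card_singleton]
    · rw [Finset.card_singleton, Finset.card_singleton]
    · -- c^{τA'}_{τA₁, τA₂} = c^{τS}_{0, τS}
      rw [tau_range]
      exact lr_pos_superstd (tauPartition S) (tau_antitone S) S.card
        (tau_eventually_zero S)
    · -- c^{τB'}_{τB₁, τB₂} = c^{τT}_{τT, 0}
      rw [tau_range]
      exact lr_pos_empty (tauPartition T)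
    · -- c^{τC'}_{τC₁, τC₂}
      rw [tau_singleton, tau_singleton, tau_singleton]
      exact lr_pos_row (hA - T.card) (hB - S.card)
    · -- c^{τA}_{τB₁, τC₂}
      rw [tau_insert_top T hA hTA, tau_singleton]
      exact lr_pos_strip (tauPartition T) (tau_antitone T) T.card
        (tau_eventually_zero T) (hA - T.card) (tau_le T hA hTA 0)
    · -- c^{τB}_{τC₁, τA₂}
      rw [tau_insert_top S hB hSB, tau_singleton]
      exact lr_pos_shifted (tauPartition S) (tau_antitone S) S.card
        (tau_eventually_zero S) (hB - S.card)
    · -- c^{τC}_{τA₁, τB₂}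
      rw [tau_range, tau_range, tau_range]
      exact lr_pos_empty zfn

end ColumnCaseAux

/-- Section 3, column case: if `μ, ν ∈ Par_n`, `|μ| + |ν| + p` is even and
`(μ, ν, (1^p))` satisfies every extended Horn inequality with ambient set
`[N]` for all sufficiently large `N`, then with `k = (|μ| + |ν| − p)/2`: the
skew shapes `μ/(μ∧ν)` and `ν/(μ∧ν)` are vertical strips, and there are at
least `|μ∧ν| − k` rows `i` with `μ_i = ν_i > 0`. -/
theorem column_case_vertical_strips (n p : ℕ) (μ ν : ℕ → ℕ)
    (hμ : IsPartitionN n μ) (hν : IsPartitionN n ν)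
    (hparity : Even ((∑ i ∈ Finset.range n, μ i) +
      (∑ i ∈ Finset.range n, ν i) + p))
    (hEH : ∀ N, n ≤ N → p ≤ N → SatisfiesExtHorn N μ ν (columnPartition p)) :
    (∀ i, μ i ≤ min (μ i) (ν i) + 1) ∧
    (∀ i, ν i ≤ min (μ i) (ν i) + 1) ∧
    (∑ i ∈ Finset.range n, (min (μ i) (ν i) : ℤ)) -
        ((∑ i ∈ Finset.range n, (μ i : ℤ)) +
          (∑ i ∈ Finset.range n, (ν i : ℤ)) - (p : ℤ)) / 2 ≤
      (Set.ncard {i : ℕ | μ i = ν i ∧ 0 < μ i} : ℤ) := by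
  classical
  obtain ⟨hμmono, hμ0⟩ := hμ
  obtain ⟨hνmono, hν0⟩ := hν
  -- the two one-row inequalities
  have key1 : ∀ s, μ s ≤ ν s + 1 := by
    intro s
    set H := n + p + s + 1 with hH
    set N := 2 * H + 2 with hN
    have hsH : s < H := by omega
    have htuple := ColumnCaseAux.M_tuple N {s} ∅ H H (by simp)
      (by intro x hx; simp at hx) (by intro x hx; simp at hx; omega)
      (by simp; omega) (by simp)
      (by simp; omega) (by omega) (by omega)
      (by simp; omega) (by intro x hx; simp at hx; omega) (by intro x hx; simp at hx)
    have hineq := hEH N (by omega) (by omega) _ _ _ _ _ _ htuple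
    simp only [Finset.card_singleton, Finset.card_empty] at hineq
    rw [Finset.sum_insert (Finset.notMem_empty H), Finset.sum_empty,
      Finset.sum_singleton, Finset.sum_insert (by simp; omega),
      Finset.sum_singleton, Finset.sum_singleton] at hineq
    have h1 : μ H = 0 := hμ0 H (by omega)
    have h2 : ν H = 0 := hν0 H (by omega)
    have h3 : columnPartition p ((H - 0) + (H - 1)) = 0 := by
      simp only [columnPartition]
      rw [if_neg (by omega)]
    have h4 : columnPartition p 0 ≤ 1 := by
      simp only [columnPartition]; split <;> omega
    rw [h1, h2, h3] at hineq
    rw [show (1 + 0 : ℕ) = 1 from rfl, Finset.sum_range_one] at hineq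
    simp only [Finset.sum_empty] at hineq
    push_cast at hineq
    omega
  have key2 : ∀ s, ν s ≤ μ s + 1 := by
    intro s
    set H := n + p + s + 1 with hH
    set N := 2 * H + 2 with hN
    have hsH : s < H := by omega
    have htuple := ColumnCaseAux.M_tuple N ∅ {s} H H (by simp)
      (by intro x hx; simp at hx; omega) (by intro x hx; simp at hx)
      (by simp) (by simp; omega)
      (by simp; omega) (by omega) (by omega)
      (by simp; omega) (by intro x hx; simp at hx) (by intro x hx; simp at hx; omega)
    have hineq := hEH N (by omega) (by omega) _ _ _ _ _ _ htuple
    simp only [Finset.card_singleton, Finset.card_empty] at hineq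
    rw [Finset.sum_insert (Finset.notMem_empty H), Finset.sum_empty,
      Finset.sum_insert (by simp; omega), Finset.sum_singleton,
      Finset.sum_singleton, Finset.sum_singleton] at hineq
    have h1 : μ H = 0 := hμ0 H (by omega)
    have h2 : ν H = 0 := hν0 H (by omega)
    have h3 : columnPartition p ((H - 1) + (H - 0)) = 0 := by
      simp only [columnPartition]
      rw [if_neg (by omega)]
    have h4 : columnPartition p 0 ≤ 1 := by
      simp only [columnPartition]; split <;> omega
    rw [h1, h2, h3] at hineq
    rw [show (0 + 1 : ℕ) = 1 from rfl, Finset.sum_range_one] at hineq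
    simp only [Finset.sum_empty] at hineq
    push_cast at hineq
    omega
  refine ⟨fun i => by have := key1 i; omega, fun i => by have := key2 i; omega, ?_⟩
  -- the counting inequality, by contradiction
  by_contra hc
  push_neg at hc
  -- setup
  have hμex : ∃ m, μ m = 0 := ⟨n, hμ0 n le_rfl⟩
  have hνex : ∃ m, ν m = 0 := ⟨n, hν0 n le_rfl⟩
  set a := Nat.find hμex with ha
  set b := Nat.find hνex with hb
  have hμa0 : μ a = 0 := Nat.find_spec hμex
  have hνb0 : ν b = 0 := Nat.find_spec hνex
  have ha_le_n : a ≤ n := Nat.find_min' hμex (hμ0 n le_rfl)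
  have hb_le_n : b ≤ n := Nat.find_min' hνex (hν0 n le_rfl)
  have hposμ : ∀ x, 0 < μ x → x < a := by
    intro x hx
    by_contra h
    have := hμmono (le_of_not_gt h)
    omega
  have hposν : ∀ x, 0 < ν x → x < b := by
    intro x hx
    by_contra h
    have := hνmono (le_of_not_gt h)
    omega
  have hposμ' : ∀ x, x < a → 0 < μ x := by
    intro x hx
    have := Nat.find_min hμex hx
    omega
  have hposν' : ∀ x, x < b → 0 < ν x := by
    intro x hx
    have := Nat.find_min hνex hx
    omega
  set Sf := (Finset.range n).filter (fun x => ν x < μ x ∧ 0 < ν x) with hSf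
  set Tf := (Finset.range n).filter (fun x => μ x < ν x ∧ 0 < μ x) with hTf
  set Ef := (Finset.range n).filter (fun x => μ x = ν x ∧ 0 < μ x) with hEf
  set Dμ := (Finset.range n).filter (fun x => ν x < μ x) with hDμ
  set Dν := (Finset.range n).filter (fun x => μ x < ν x) with hDν
  -- rewrite the ncard as a filter card
  have hset : {i : ℕ | μ i = ν i ∧ 0 < μ i} = (Ef : Set ℕ) := by
    ext x
    simp only [Set.mem_setOf_eq, hEf, Finset.coe_filter, Finset.mem_range,
      Set.mem_setOf_eq]
    constructor
    · rintro ⟨h1, h2⟩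
      exact ⟨lt_of_lt_of_le (hposμ x h2) ha_le_n, h1, h2⟩
    · rintro ⟨_, h⟩
      exact h
  rw [hset, Set.ncard_coe_finset] at hc
  -- counting identities
  have hcount : ∀ x ∈ Finset.range n,
      (if 0 < μ x then (1:ℕ) else 0) =
        (if (μ x = ν x ∧ 0 < μ x) then 1 else 0) +
          ((if ν x < μ x then 1 else 0) + (if (μ x < ν x ∧ 0 < μ x) then 1 else 0)) := by
    intro x _
    split_ifs <;> omega
  have hcount' : ∀ x ∈ Finset.range n,
      (if 0 < ν x then (1:ℕ) else 0) =
        (if (μ x = ν x ∧ 0 < μ x) then 1 else 0) +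
          ((if μ x < ν x then 1 else 0) + (if (ν x < μ x ∧ 0 < ν x) then 1 else 0)) := by
    intro x _
    split_ifs <;> omega
  have hrange_a : (Finset.range n).filter (fun x => 0 < μ x) = Finset.range a := by
    ext x
    simp only [Finset.mem_filter, Finset.mem_range]
    constructor
    · rintro ⟨_, h⟩; exact hposμ x h
    · intro h; exact ⟨lt_of_lt_of_le h ha_le_n, hposμ' x h⟩
  have hrange_b : (Finset.range n).filter (fun x => 0 < ν x) = Finset.range b := by
    ext x
    simp only [Finset.mem_filter, Finset.mem_range]
    constructor
    · rintro ⟨_, h⟩; exact hposν x h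
    · intro h; exact ⟨lt_of_lt_of_le h hb_le_n, hposν' x h⟩
  have hacount : a = Ef.card + (Dμ.card + Tf.card) := by
    have h1 : a = ((Finset.range n).filter (fun x => 0 < μ x)).card := by
      rw [hrange_a, Finset.card_range]
    rw [h1, Finset.card_filter, Finset.sum_congr rfl hcount,
      Finset.sum_add_distrib, Finset.sum_add_distrib,
      ← Finset.card_filter, ← Finset.card_filter, ← Finset.card_filter]
  have hbcount : b = Ef.card + (Dν.card + Sf.card) := by
    have h1 : b = ((Finset.range n).filter (fun x => 0 < ν x)).card := by
      rw [hrange_b, Finset.card_range]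
    rw [h1, Finset.card_filter, Finset.sum_congr rfl hcount',
      Finset.sum_add_distrib, Finset.sum_add_distrib,
      ← Finset.card_filter, ← Finset.card_filter, ← Finset.card_filter]
  have hr_le : Sf.card ≤ Dμ.card := by
    refine Finset.card_le_card (fun x hx => ?_)
    rw [Finset.mem_filter] at hx ⊢
    exact ⟨hx.1, hx.2.1⟩
  have ht_le : Tf.card ≤ Dν.card := by
    refine Finset.card_le_card (fun x hx => ?_)
    rw [Finset.mem_filter] at hx ⊢
    exact ⟨hx.1, hx.2.1⟩
  -- the difference-sum identity
  have hdiff : (∑ i ∈ Finset.range n, (μ i : ℤ)) + (∑ i ∈ Finset.range n, (ν i : ℤ))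
      - 2 * (∑ i ∈ Finset.range n, (min (μ i) (ν i) : ℤ))
      = (Dμ.card : ℤ) + (Dν.card : ℤ) := by
    have e1 : (∑ i ∈ Finset.range n, (μ i : ℤ)) + (∑ i ∈ Finset.range n, (ν i : ℤ))
        - 2 * (∑ i ∈ Finset.range n, (min (μ i) (ν i) : ℤ))
        = ∑ i ∈ Finset.range n,
            ((μ i : ℤ) + (ν i : ℤ) - 2 * (min (μ i) (ν i) : ℤ)) := by
      rw [Finset.sum_sub_distrib, Finset.sum_add_distrib, Finset.mul_sum]
    have e2 : ∀ x ∈ Finset.range n,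
        ((μ x : ℤ) + (ν x : ℤ) - 2 * (min (μ x) (ν x) : ℤ))
          = (if ν x < μ x then (1:ℤ) else 0) + (if μ x < ν x then (1:ℤ) else 0) := by
      intro x _
      have k1 := key1 x
      have k2 := key2 x
      split_ifs <;> push_cast <;> omega
    rw [e1, Finset.sum_congr rfl e2, Finset.sum_add_distrib,
      Finset.sum_boole, Finset.sum_boole]
  -- parity
  obtain ⟨c0, hc0⟩ := hparity
  have hc0' : (∑ i ∈ Finset.range n, (μ i : ℤ)) + (∑ i ∈ Finset.range n, (ν i : ℤ))
      + (p : ℤ) = 2 * (c0 : ℤ) := by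
    have := congrArg (fun x : ℕ => (x : ℤ)) hc0
    push_cast at this ⊢
    linarith
  -- deduce the lower bound on p
  have hp2 : (Dμ.card : ℤ) + (Dν.card : ℤ) + 2 * (Ef.card : ℤ) + 2 ≤ (p : ℤ) := by
    omega
  have hp2' : Dμ.card + Dν.card + 2 * Ef.card + 2 ≤ p := by
    exact_mod_cast hp2
  -- instantiate the main tuple
  set N := n + p + 2 with hNdef
  have haTf : a ∉ Tf := by
    intro hmem
    have := (Finset.mem_filter.1 hmem).2.2
    have := hposμ a this
    omega
  have hbSf : b ∉ Sf := by
    intro hmem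
    have := (Finset.mem_filter.1 hmem).2.2
    have := hposν b this
    omega
  have hTfa : ∀ x ∈ Tf, x < a := by
    intro x hx
    exact hposμ x (Finset.mem_filter.1 hx).2.2
  have hSfb : ∀ x ∈ Sf, x < b := by
    intro x hx
    exact hposν x (Finset.mem_filter.1 hx).2.2
  have hta : Tf.card ≤ a := by
    have : Tf ⊆ Finset.range a := fun x hx => Finset.mem_range.2 (hTfa x hx)
    simpa using Finset.card_le_card this
  have hrb : Sf.card ≤ b := by
    have : Sf ⊆ Finset.range b := fun x hx => Finset.mem_range.2 (hSfb x hx)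
    simpa using Finset.card_le_card this
  have hat' : a - Tf.card = Ef.card + Dμ.card := by omega
  have hbr' : b - Sf.card = Ef.card + Dν.card := by omega
  have hkval : (a - Tf.card) + (b - Sf.card) = 2 * Ef.card + (Dμ.card + Dν.card) := by
    omega
  have hkp : (a - Tf.card) + (b - Sf.card) < p := by omega
  have htuple := ColumnCaseAux.M_tuple N Sf Tf a b
    (by
      rw [Finset.disjoint_left]
      intro x hx hx'
      have h1 := (Finset.mem_filter.1 hx).2
      have h2 := (Finset.mem_filter.1 hx').2
      omega)
    hTfa hSfb
    (by
      intro hmem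
      have := (Finset.mem_filter.1 hmem).2
      omega)
    (by
      intro hmem
      have := (Finset.mem_filter.1 hmem).2
      omega)
    (by omega)
    (by omega) (by omega) (by omega)
    (by intro x hx; have := Finset.mem_range.1 (Finset.mem_filter.1 hx).1; omega)
    (by intro x hx; have := Finset.mem_range.1 (Finset.mem_filter.1 hx).1; omega)
  have hineq := hEH N (by omega) (by omega) _ _ _ _ _ _ htuple
  rw [Finset.sum_insert haTf, Finset.sum_insert hbSf, Finset.sum_singleton] at hineq
  -- evaluate the lambda sums
  have hlamC : ∑ k ∈ Finset.range (Sf.card + Tf.card), (columnPartition p k : ℤ)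
      = (Sf.card : ℤ) + (Tf.card : ℤ) := by
    have hstep : ∀ k ∈ Finset.range (Sf.card + Tf.card),
        (columnPartition p k : ℤ) = 1 := by
      intro k hk
      have hk' := Finset.mem_range.1 hk
      simp only [columnPartition]
      rw [if_pos (by omega)]
      norm_num
    rw [Finset.sum_congr rfl hstep, Finset.sum_const, Finset.card_range]
    push_cast
    ring
  have hlamC' : (columnPartition p ((a - Tf.card) + (b - Sf.card)) : ℤ) = 1 := by
    simp only [columnPartition]
    rw [if_pos hkp]
    norm_num
  rw [hlamC, hlamC'] at hineq
  rw [hμa0, hνb0] at hineq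
  -- the S and T sums
  have hSsum : ∑ x ∈ Sf, ((μ x : ℤ) - (ν x : ℤ)) = (Sf.card : ℤ) := by
    have hstep : ∀ x ∈ Sf, ((μ x : ℤ) - (ν x : ℤ)) = 1 := by
      intro x hx
      have h1 := (Finset.mem_filter.1 hx).2.1
      have h2 := key1 x
      push_cast
      omega
    rw [Finset.sum_congr rfl hstep, Finset.sum_const]
    push_cast
    ring
  have hTsum : ∑ x ∈ Tf, ((ν x : ℤ) - (μ x : ℤ)) = (Tf.card : ℤ) := by
    have hstep : ∀ x ∈ Tf, ((ν x : ℤ) - (μ x : ℤ)) = 1 := by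
      intro x hx
      have h1 := (Finset.mem_filter.1 hx).2.1
      have h2 := key2 x
      push_cast
      omega
    rw [Finset.sum_congr rfl hstep, Finset.sum_const]
    push_cast
    ring
  have hSsum' : ∑ x ∈ Sf, ((μ x : ℤ)) - ∑ x ∈ Sf, ((ν x : ℤ)) = (Sf.card : ℤ) := by
    rw [← Finset.sum_sub_distrib]
    exact hSsum
  have hTsum' : ∑ x ∈ Tf, ((ν x : ℤ)) - ∑ x ∈ Tf, ((μ x : ℤ)) = (Tf.card : ℤ) := by
    rw [← Finset.sum_sub_distrib]
    exact hTsum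
  push_cast at hineq
  linarith
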